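/- Let n₁, …, n_N be unit vectors in ℝ³ and η ∈ [0,1], defining the qubit observables M_k with effects E^k_± = (1/2)(I ± η σ·n_k). For each sign vector X ∈ {+1,−1}^N let m_X := Σ_{k=1}^N X_k n_k. If η ≤ 2^N / (Σ_{X ∈ {+1,−1}^N} |m_X|), then the observables M₁, …, M_N are jointly measurable. -/

import Mathlib

open Matrix ComplexOrder

noncomputable section

abbrev Mat2 := Matrix (Fin 2) (Fin 2) ℂ

/-- Pauli matrix σ₁. -/
def σ1 : Mat2 := !![0, 1; 1, 0]
/-- Pauli matrix σ₂. -/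
def σ2 : Mat2 := !![0, -Complex.I; Complex.I, 0]
/-- Pauli matrix σ₃. -/
def σ3 : Mat2 := !![1, 0; 0, -1]

/-- σ·a for a real 3-vector a. -/
def pauli (a : Fin 3 → ℝ) : Mat2 := (a 0 : ℂ) • σ1 + (a 1 : ℂ) • σ2 + (a 2 : ℂ) • σ3

/-- Euclidean inner product on ℝ³. -/
def dot3 (a b : Fin 3 → ℝ) : ℝ := a 0 * b 0 + a 1 * b 1 + a 2 * b 2

/-- Euclidean norm on ℝ³. -/
def norm3 (a : Fin 3 → ℝ) : ℝ := Real.sqrt (dot3 a a)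

/-- A qubit effect: both `E` and `I - E` positive semidefinite. -/
def IsEffect (E : Mat2) : Prop := E.PosSemidef ∧ (1 - E).PosSemidef

/-- A qubit density matrix. -/
def IsDensity (ρ : Mat2) : Prop := ρ.PosSemidef ∧ ρ.trace = 1

/-- E₊ = (1/2)(I + η σ·n). -/
def Epos (η : ℝ) (n : Fin 3 → ℝ) : Mat2 := (1/2 : ℂ) • (1 + (η : ℂ) • pauli n)
/-- E₋ = (1/2)(I - η σ·n). -/
def Eneg (η : ℝ) (n : Fin 3 → ℝ) : Mat2 := (1/2 : ℂ) • (1 - (η : ℂ) • pauli n)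

/-- A pairwise joint measurement of the noisy spin-1/2 observables along nᵢ and nⱼ. -/
def IsJointMmt (η : ℝ) (ni nj : Fin 3 → ℝ) (Gpp Gpm Gmp Gmm : Mat2) : Prop :=
  IsEffect Gpp ∧ IsEffect Gpm ∧ IsEffect Gmp ∧ IsEffect Gmm ∧
  Gpp + Gpm = Epos η ni ∧ Gmp + Gmm = Eneg η ni ∧
  Gpp + Gmp = Epos η nj ∧ Gpm + Gmm = Eneg η nj

/-- Average anticorrelation probability R₃(ρ), given the anticorrelation effects of the
three pairwise joint measurements. -/
def R3 (ρ G12pm G12mp G13pm G13mp G23pm G23mp : Mat2) : ℝ :=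
  (1/3) * ((ρ * (G12pm + G12mp)).trace.re + (ρ * (G13pm + G13mp)).trace.re +
    (ρ * (G23pm + G23mp)).trace.re)

/-- Parametric joint-measurement family. -/
def Gpp (η : ℝ) (ni nj : Fin 3 → ℝ) (α : ℝ) (a : Fin 3 → ℝ) : Mat2 :=
  (1/2 : ℂ) • (((α/2 : ℝ) : ℂ) • (1 : Mat2) + pauli ((1/2 : ℝ) • (η • (ni + nj) - a)))
def Gpm (η : ℝ) (ni nj : Fin 3 → ℝ) (α : ℝ) (a : Fin 3 → ℝ) : Mat2 :=
  (1/2 : ℂ) • (((1 - α/2 : ℝ) : ℂ) • (1 : Mat2) + pauli ((1/2 : ℝ) • (η • (ni - nj) + a)))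
def Gmp (η : ℝ) (ni nj : Fin 3 → ℝ) (α : ℝ) (a : Fin 3 → ℝ) : Mat2 :=
  (1/2 : ℂ) • (((1 - α/2 : ℝ) : ℂ) • (1 : Mat2) + pauli ((1/2 : ℝ) • (-(η • ni) + η • nj + a)))
def Gmm (η : ℝ) (ni nj : Fin 3 → ℝ) (α : ℝ) (a : Fin 3 → ℝ) : Mat2 :=
  (1/2 : ℂ) • (((α/2 : ℝ) : ℂ) • (1 : Mat2) + pauli ((1/2 : ℝ) • (-(η • (ni + nj)) - a)))

/-- Trine directions in the ZX plane. -/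
def tn1 : Fin 3 → ℝ := ![0, 0, 1]
def tn2 : Fin 3 → ℝ := ![Real.sqrt 3 / 2, 0, -(1/2)]
def tn3 : Fin 3 → ℝ := ![-(Real.sqrt 3 / 2), 0, -(1/2)]

/-- sign of a Boolean, as ±1. -/
def sgn (b : Bool) : ℝ := if b then 1 else -1

/-- m_X = Σₖ Xₖ nₖ. -/
def mvec {N : ℕ} (n : Fin N → Fin 3 → ℝ) (X : Fin N → Bool) : Fin 3 → ℝ :=
  ∑ k, sgn (X k) • n k

/-- Joint measurability of the N noisy qubit observables. -/
def JointlyMeasurable {N : ℕ} (η : ℝ) (n : Fin N → Fin 3 → ℝ) : Prop :=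
  ∃ E : (Fin N → Bool) → Mat2,
    (∀ X, IsEffect (E X)) ∧ (∑ X, E X) = 1 ∧
    (∀ k, ∑ X ∈ Finset.univ.filter (fun X => X k = true), E X = Epos η (n k)) ∧
    (∀ k, ∑ X ∈ Finset.univ.filter (fun X => X k = false), E X = Eneg η (n k))

/- ===== auxiliary lemmas ===== -/

lemma pauli_add' (u v : Fin 3 → ℝ) : pauli (u + v) = pauli u + pauli v := by
  simp only [pauli, Pi.add_apply, Complex.ofReal_add, add_smul]; module

lemma pauli_smul' (r : ℝ) (v : Fin 3 → ℝ) : pauli (r • v) = (r : ℂ) • pauli v := by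
  simp only [pauli, Pi.smul_apply, smul_eq_mul, Complex.ofReal_mul, smul_add]; module

lemma pauli_zero' : pauli 0 = 0 := by simp [pauli]

lemma pauli_neg' (v : Fin 3 → ℝ) : pauli (-v) = - pauli v := by
  have := pauli_smul' (-1) v
  simpa using this

lemma pauli_sum' {ι : Type*} (s : Finset ι) (f : ι → Fin 3 → ℝ) :
    pauli (∑ i ∈ s, f i) = ∑ i ∈ s, pauli (f i) := by
  classical
  induction s using Finset.cons_induction with
  | empty => simp [pauli_zero']
  | cons a s ha ih => rw [Finset.sum_cons, Finset.sum_cons, pauli_add', ih]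

lemma dot3_self_nonneg (v : Fin 3 → ℝ) : 0 ≤ dot3 v v := by
  simp only [dot3]
  nlinarith [mul_self_nonneg (v 0), mul_self_nonneg (v 1), mul_self_nonneg (v 2)]

lemma norm3_nonneg' (v : Fin 3 → ℝ) : 0 ≤ norm3 v := Real.sqrt_nonneg _

lemma norm3_neg' (v : Fin 3 → ℝ) : norm3 (-v) = norm3 v := by
  simp only [norm3, dot3, Pi.neg_apply]; ring_nf

lemma norm3_smul' (r : ℝ) (hr : 0 ≤ r) (v : Fin 3 → ℝ) : norm3 (r • v) = r * norm3 v := by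
  have : dot3 (r • v) (r • v) = r^2 * dot3 v v := by
    simp only [dot3, Pi.smul_apply, smul_eq_mul]; ring
  rw [norm3, this, norm3, Real.sqrt_mul (sq_nonneg r), Real.sqrt_sq hr]

lemma norm3_zero' : norm3 (0 : Fin 3 → ℝ) = 0 := by simp [norm3, dot3]

lemma norm3_eq_zero' {v : Fin 3 → ℝ} (h : norm3 v = 0) : v = 0 := by
  rw [norm3, Real.sqrt_eq_zero (dot3_self_nonneg v)] at h
  simp only [dot3] at h
  have h0 : v 0 = 0 := by nlinarith [mul_self_nonneg (v 1), mul_self_nonneg (v 2)]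
  have h1 : v 1 = 0 := by nlinarith [mul_self_nonneg (v 0), mul_self_nonneg (v 2)]
  have h2 : v 2 = 0 := by nlinarith [mul_self_nonneg (v 0), mul_self_nonneg (v 1)]
  funext i
  fin_cases i <;> simpa using ‹_›

lemma quad_nonneg' (c v0 v1 v2 w0 w1 w2 T : ℝ) (hc : 0 ≤ c)
    (hv : v0^2 + v1^2 + v2^2 ≤ c^2) (hw : w0^2 + w1^2 + w2^2 = T^2) (hT : 0 ≤ T) :
    0 ≤ c * T + (v0 * w0 + v1 * w1 + v2 * w2) := by
  nlinarith [sq_nonneg (v0*w1 - v1*w0), sq_nonneg (v0*w2 - v2*w0), sq_nonneg (v1*w2 - v2*w1),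
    sq_nonneg (c*T + (v0*w0 + v1*w1 + v2*w2)), mul_nonneg hc hT]

lemma psd_helper' (c : ℝ) (v : Fin 3 → ℝ) (h : norm3 v ≤ c) :
    ((c : ℂ) • (1 : Mat2) + pauli v).PosSemidef := by
  have hc : 0 ≤ c := le_trans (Real.sqrt_nonneg _) h
  rw [norm3] at h
  have hvv : v 0 ^ 2 + v 1 ^ 2 + v 2 ^ 2 ≤ c ^ 2 := by
    have h2 := Real.sq_sqrt (dot3_self_nonneg v)
    simp only [dot3] at h2 h
    nlinarith [Real.sqrt_nonneg (v 0 * v 0 + v 1 * v 1 + v 2 * v 2)]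
  refine Matrix.PosSemidef.of_dotProduct_mulVec_nonneg ?_ ?_
  · ext i j
    fin_cases i <;> fin_cases j <;>
      simp [pauli, σ1, σ2, σ3, Matrix.conjTranspose_apply, Matrix.one_apply, Complex.ext_iff]
  · intro x
    set a := x 0 with ha
    set b := x 1 with hb
    have expand : star x ⬝ᵥ ((((c : ℂ) • (1 : Mat2) + pauli v)) *ᵥ x) =
        ((c + v 2) * (Complex.normSq a) + (c - v 2) * (Complex.normSq b)
          + (v 0 - v 1 * Complex.I) * (starRingEnd ℂ a * b)
          + (v 0 + v 1 * Complex.I) * (starRingEnd ℂ b * a) : ℂ) := by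
      simp [dotProduct, Matrix.mulVec, pauli, σ1, σ2, σ3, Fin.sum_univ_two,
        Matrix.one_apply, Complex.normSq_eq_conj_mul_self]
      ring
    rw [expand, Complex.le_def]
    have hw : (2*(a.re*b.re + a.im*b.im))^2 + (2*(a.re*b.im - a.im*b.re))^2
        + (a.re^2 + a.im^2 - (b.re^2 + b.im^2))^2
        = (a.re^2 + a.im^2 + (b.re^2 + b.im^2))^2 := by ring
    have key := quad_nonneg' c (v 0) (v 1) (v 2)
        (2*(a.re*b.re + a.im*b.im)) (2*(a.re*b.im - a.im*b.re))
        (a.re^2 + a.im^2 - (b.re^2 + b.im^2)) (a.re^2 + a.im^2 + (b.re^2 + b.im^2))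
        hc hvv hw (by positivity)
    constructor
    · simp only [Complex.add_re, Complex.sub_re, Complex.mul_re, Complex.ofReal_re,
        Complex.ofReal_im, Complex.add_im, Complex.sub_im, Complex.mul_im, Complex.I_re,
        Complex.I_im, Complex.normSq_apply, Complex.zero_re, RingHom.coe_coe,
        Complex.conj_re, Complex.conj_im]
      nlinarith [key]
    · simp only [Complex.add_im, Complex.sub_im, Complex.mul_im, Complex.mul_re,
        Complex.add_re, Complex.sub_re,
        Complex.ofReal_re, Complex.ofReal_im, Complex.I_re, Complex.I_im, Complex.zero_im,
        RingHom.coe_coe, Complex.conj_re, Complex.conj_im, Complex.normSq_apply]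
      ring

lemma sgn_not' (b : Bool) : sgn (!b) = - sgn b := by cases b <;> simp [sgn]

def negX' {N : ℕ} (X : Fin N → Bool) : Fin N → Bool := fun j => !(X j)

lemma negX_invol' {N : ℕ} : Function.Involutive (negX' (N := N)) := by
  intro X; funext j; simp [negX']

lemma sum_comp_negX' {N : ℕ} {M : Type*} [AddCommMonoid M] (f : (Fin N → Bool) → M) :
    ∑ X, f (negX' X) = ∑ X, f X :=
  Function.Bijective.sum_comp negX_invol'.bijective f

lemma sum_sgn_smul' {N : ℕ} (k : Fin N) {M : Type*} [AddCommGroup M] [Module ℝ M]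
    (f : (Fin N → Bool) → M) (hf : ∀ X, f (negX' X) = f X) :
    ∑ X, sgn (X k) • f X = 0 := by
  have h1 : ∑ X, sgn (X k) • f X = ∑ X, sgn ((negX' X) k) • f (negX' X) :=
    (sum_comp_negX' _).symm
  have h2 : ∀ X : Fin N → Bool, sgn ((negX' X) k) • f (negX' X) = - (sgn (X k) • f X) := by
    intro X; rw [hf]; simp [negX', sgn_not']
  rw [Finset.sum_congr rfl (fun X _ => h2 X), Finset.sum_neg_distrib] at h1
  have h3 : ∑ X, sgn (X k) • f X + ∑ X, sgn (X k) • f X = 0 := by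
    nth_rewrite 2 [h1]; abel
  rw [← two_smul ℝ] at h3
  exact (smul_eq_zero.mp h3).resolve_left (by norm_num)

lemma sum_sgn_sgn' {N : ℕ} (k j : Fin N) :
    ∑ X : Fin N → Bool, sgn (X k) * sgn (X j) = if j = k then (2^N : ℝ) else 0 := by
  rcases eq_or_ne j k with hjk | hjk
  · subst hjk
    have : ∀ X : Fin N → Bool, sgn (X j) * sgn (X j) = 1 := by
      intro X; cases X j <;> simp [sgn]
    rw [Finset.sum_congr rfl (fun X _ => this X)]
    simp [Finset.card_univ]
  · rw [if_neg hjk]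
    set φ : (Fin N → Bool) → (Fin N → Bool) := fun X => Function.update X j (!(X j)) with hφ
    have hinv : Function.Involutive φ := by
      intro X; funext i
      rcases eq_or_ne i j with rfl | hij
      · simp [hφ, Function.update_self]
      · simp [hφ, Function.update_of_ne hij]
    have h1 : ∑ X : Fin N → Bool, sgn (X k) * sgn (X j)
        = ∑ X : Fin N → Bool, sgn ((φ X) k) * sgn ((φ X) j) :=
      (Function.Bijective.sum_comp hinv.bijective _).symm
    have h2 : ∀ X : Fin N → Bool, sgn ((φ X) k) * sgn ((φ X) j)
        = - (sgn (X k) * sgn (X j)) := by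
      intro X
      have hk : (φ X) k = X k := Function.update_of_ne (fun hh => hjk hh.symm) _ _
      have hj : (φ X) j = !(X j) := Function.update_self _ _ _
      rw [hk, hj, sgn_not']; ring
    rw [Finset.sum_congr rfl (fun X _ => h2 X), Finset.sum_neg_distrib] at h1
    linarith

lemma filter_split' {N : ℕ} (k : Fin N) {M : Type*} [AddCommGroup M] [Module ℝ M]
    (F : (Fin N → Bool) → M) :
    (∑ X ∈ Finset.univ.filter (fun X => X k = true), F X
      = (1/2 : ℝ) • ((∑ X, F X) + ∑ X, sgn (X k) • F X)) ∧
    (∑ X ∈ Finset.univ.filter (fun X => X k = false), F X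
      = (1/2 : ℝ) • ((∑ X, F X) - ∑ X, sgn (X k) • F X)) := by
  have hfil : Finset.univ.filter (fun X : Fin N → Bool => ¬ X k = true)
      = Finset.univ.filter (fun X : Fin N → Bool => X k = false) := by
    ext X; simp
  have hAB : (∑ X ∈ Finset.univ.filter (fun X => X k = true), F X)
      + ∑ X ∈ Finset.univ.filter (fun X => X k = false), F X = ∑ X, F X := by
    rw [← hfil]
    exact Finset.sum_filter_add_sum_filter_not Finset.univ _ F
  have hite : ∀ X : Fin N → Bool, sgn (X k) • F X = if X k = true then F X else - F X := by
    intro X; cases hX : X k <;> simp [sgn, hX]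
  have hD : ∑ X, sgn (X k) • F X
      = (∑ X ∈ Finset.univ.filter (fun X => X k = true), F X)
        - ∑ X ∈ Finset.univ.filter (fun X => X k = false), F X := by
    rw [Finset.sum_congr rfl (fun X _ => hite X), Finset.sum_ite, hfil]
    rw [Finset.sum_neg_distrib, sub_eq_add_neg]
  set A := ∑ X ∈ Finset.univ.filter (fun X => X k = true), F X with hA
  set B := ∑ X ∈ Finset.univ.filter (fun X => X k = false), F X with hB
  constructor
  · rw [← hAB, hD]
    have h2A : (A + B) + (A - B) = (2:ℝ) • A := by rw [two_smul]; abel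
    rw [h2A, smul_smul]; norm_num
  · rw [← hAB, hD]
    have h2B : (A + B) - (A - B) = (2:ℝ) • B := by rw [two_smul]; abel
    rw [h2B, smul_smul]; norm_num

lemma mvec_negX' {N : ℕ} (n : Fin N → Fin 3 → ℝ) (X : Fin N → Bool) :
    mvec n (negX' X) = - mvec n X := by
  simp only [mvec, negX', sgn_not', neg_smul, Finset.sum_neg_distrib]

lemma sum_mvec' {N : ℕ} (n : Fin N → Fin 3 → ℝ) : ∑ X : Fin N → Bool, mvec n X = 0 := by
  simp only [mvec]
  rw [Finset.sum_comm]
  apply Finset.sum_eq_zero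
  intro j _
  exact sum_sgn_smul' j (fun _ => n j) (fun _ => rfl)

lemma sum_sgn_mvec' {N : ℕ} (n : Fin N → Fin 3 → ℝ) (k : Fin N) :
    ∑ X : Fin N → Bool, sgn (X k) • mvec n X = (2^N : ℝ) • n k := by
  simp only [mvec, Finset.smul_sum, smul_smul]
  rw [Finset.sum_comm]
  have : ∀ j : Fin N, ∑ X : Fin N → Bool, (sgn (X k) * sgn (X j)) • n j
      = (if j = k then (2^N : ℝ) else 0) • n j := by
    intro j
    rw [← Finset.sum_smul, sum_sgn_sgn']
  rw [Finset.sum_congr rfl (fun j _ => this j)]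
  simp only [ite_smul, zero_smul]
  rw [Finset.sum_ite_eq' Finset.univ k (fun j => (2^N : ℝ) • n j)]
  simp

lemma Epos_eq' (η : ℝ) (n : Fin 3 → ℝ) :
    Epos η n = (((1/2 : ℝ)) : ℂ) • (1 : Mat2) + pauli ((1/2 : ℝ) • (η • n)) := by
  rw [Epos, pauli_smul', pauli_smul']
  push_cast
  module

lemma Eneg_eq' (η : ℝ) (n : Fin 3 → ℝ) :
    Eneg η n = (((1/2 : ℝ)) : ℂ) • (1 : Mat2) + pauli ((1/2 : ℝ) • (-(η • n))) := by
  have hv : ((1/2 : ℝ) • (-(η • n))) = (-(η/2)) • n := by module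
  rw [Eneg, hv, pauli_smul']
  push_cast
  module

/-- Sufficient condition for joint measurability of N noisy spin-1/2 qubit observables:
η ≤ 2^N / Σ_X |m_X|. -/
theorem joint_measurability_sufficient {N : ℕ}
    (n : Fin N → Fin 3 → ℝ) (hn : ∀ k, norm3 (n k) = 1)
    (η : ℝ) (hη : η ∈ Set.Icc (0 : ℝ) 1)
    (h : η ≤ 2^N / ∑ X : Fin N → Bool, norm3 (mvec n X)) :
    JointlyMeasurable η n := by
  obtain ⟨hη0, _⟩ := hη
  rcases Nat.eq_zero_or_pos N with hN | hN
  · subst hN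
    refine ⟨fun _ => 1, fun X => ⟨Matrix.PosSemidef.one, by simpa using
      (Matrix.PosSemidef.zero : (0 : Mat2).PosSemidef)⟩, ?_, fun k => k.elim0, fun k => k.elim0⟩
    rw [Finset.sum_const, Finset.card_univ]
    simp
  · set S := ∑ X : Fin N → Bool, norm3 (mvec n X) with hS
    have hSnonneg : 0 ≤ S := Finset.sum_nonneg fun X _ => norm3_nonneg' _
    have hSpos : 0 < S := by
      rcases hSnonneg.lt_or_eq with h' | h'
      · exact h'
      · exfalso
        have hall : ∀ X : Fin N → Bool, mvec n X = 0 := by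
          intro X
          apply norm3_eq_zero'
          exact (Finset.sum_eq_zero_iff_of_nonneg
            (fun Y _ => norm3_nonneg' (mvec n Y))).mp h'.symm X (Finset.mem_univ X)
        have hk := sum_sgn_mvec' n ⟨0, hN⟩
        rw [Finset.sum_congr rfl (fun X _ => by rw [hall X, smul_zero])] at hk
        rw [Finset.sum_const, smul_zero] at hk
        have hnk : n ⟨0, hN⟩ = 0 := by
          have h2 : ((2:ℝ)^N) • n ⟨0, hN⟩ = 0 := hk.symm
          rcases smul_eq_zero.mp h2 with h3 | h3
          · exact absurd h3 (by positivity)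
          · exact h3
        have := hn ⟨0, hN⟩
        rw [hnk, norm3_zero'] at this
        norm_num at this
    have hS2 : η * S ≤ 2^N := by
      have := (le_div_iff₀ hSpos).mp h
      linarith
    set c : (Fin N → Bool) → ℝ := fun X => norm3 (mvec n X) / S with hc
    set g : (Fin N → Bool) → (Fin 3 → ℝ) := fun X => (η / 2^N) • mvec n X with hg
    set E : (Fin N → Bool) → Mat2 := fun X => ((c X : ℝ) : ℂ) • 1 + pauli (g X) with hE
    have hcnn : ∀ X, 0 ≤ c X := fun X => div_nonneg (norm3_nonneg' _) hSnonneg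
    have sumE : ∀ s : Finset (Fin N → Bool), ∑ X ∈ s, E X
        = ((∑ X ∈ s, c X : ℝ) : ℂ) • (1 : Mat2) + pauli (∑ X ∈ s, g X) := by
      intro s
      rw [hE]
      rw [Finset.sum_add_distrib, pauli_sum']
      congr 1
      rw [← Finset.sum_smul, Complex.ofReal_sum]
    have hkey : ∀ X, norm3 (g X) ≤ c X := by
      intro X
      rw [hg]
      simp only
      rw [norm3_smul' _ (by positivity)]
      have hdd : η / 2^N ≤ 1 / S := by
        rw [div_le_div_iff₀ (by positivity) hSpos]
        linarith
      calc η / 2^N * norm3 (mvec n X) ≤ 1/S * norm3 (mvec n X) :=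
            mul_le_mul_of_nonneg_right hdd (norm3_nonneg' _)
        _ = c X := by rw [hc]; ring
    have hchalf : ∀ X, c X ≤ 1/2 := by
      intro X
      have hne : X ≠ negX' X := by
        intro hXX
        have := congrFun hXX ⟨0, hN⟩
        simp [negX'] at this
      have hpair : norm3 (mvec n X) + norm3 (mvec n (negX' X)) ≤ S := by
        have hsub := Finset.sum_le_sum_of_subset_of_nonneg
          (Finset.subset_univ ({X, negX' X} : Finset (Fin N → Bool)))
          (fun Y _ _ => norm3_nonneg' (mvec n Y))
        rwa [Finset.sum_pair hne] at hsub
      rw [mvec_negX', norm3_neg'] at hpair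
      rw [hc]
      simp only
      rw [div_le_iff₀ hSpos]
      linarith
    have hcneg : ∀ X, c (negX' X) = c X := by
      intro X
      simp only [hc, mvec_negX', norm3_neg']
    have heff : ∀ X, IsEffect (E X) := by
      intro X
      constructor
      · exact psd_helper' (c X) (g X) (hkey X)
      · have hre : (1 : Mat2) - E X = (((1 - c X : ℝ)) : ℂ) • 1 + pauli (- g X) := by
          rw [hE, pauli_neg']
          push_cast
          module
        rw [hre]
        apply psd_helper'
        rw [norm3_neg']
        have := hkey X
        have := hchalf X
        linarith
    have hgneg : ∀ X, g (negX' X) = - g X := by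
      intro X; simp only [hg, mvec_negX', smul_neg]
    have hsumc : ∑ X, c X = 1 := by
      rw [hc]
      simp only
      rw [← Finset.sum_div, ← hS, div_self hSpos.ne']
    have hsumg : ∑ X, g X = 0 := by
      rw [hg]
      simp only
      rw [← Finset.smul_sum, sum_mvec', smul_zero]
    have hsgnc : ∀ k, ∑ X, sgn (X k) • c X = 0 := by
      intro k
      exact sum_sgn_smul' k c hcneg
    have hsgng : ∀ k, ∑ X, sgn (X k) • g X = η • n k := by
      intro k
      have : ∀ X : Fin N → Bool, sgn (X k) • g X = (η / 2^N) • (sgn (X k) • mvec n X) := by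
        intro X
        rw [hg]
        simp only
        rw [smul_comm]
      rw [Finset.sum_congr rfl (fun X _ => this X), ← Finset.smul_sum, sum_sgn_mvec',
        smul_smul]
      congr 1
      field_simp
    refine ⟨E, heff, ?_, ?_, ?_⟩
    · rw [sumE Finset.univ, hsumc, hsumg, pauli_zero']
      simp
    · intro k
      rw [sumE _, (filter_split' k c).1, (filter_split' k g).1]
      rw [hsumc, hsgnc k, hsumg, hsgng k, add_zero, zero_add]
      rw [Epos_eq' η (n k)]
      norm_num
    · intro k
      rw [sumE _, (filter_split' k c).2, (filter_split' k g).2]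
      rw [hsumc, hsgnc k, hsumg, hsgng k, sub_zero, zero_sub]
      rw [Eneg_eq' η (n k)]
      norm_num

end
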